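/- For every complex number a, F(a, 1 − a; 1/2; 3/4) = 2 sin((4a + 1)π/6), where the left-hand side is the convergent Gauss hypergeometric series at x = 3/4. -/

import Mathlib

/-- The general term of the Gauss hypergeometric series `F(a, b; c; x)`:
`((a)_n (b)_n) / ((c)_n n!) * x ^ n`, where `(q)_n` is the Pochhammer symbol
(rising factorial). -/
noncomputable def gaussHypTerm (a b c x : ℂ) (n : ℕ) : ℂ :=
  (ascPochhammer ℂ n).eval a * (ascPochhammer ℂ n).eval b /
    ((ascPochhammer ℂ n).eval c * (n.factorial : ℂ)) * x ^ n

namespace HypAux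

open Finset Filter Set


open Finset Filter Set

noncomputable def cc (a : ℂ) (n : ℕ) : ℂ :=
  (ascPochhammer ℂ n).eval a * (ascPochhammer ℂ n).eval (1 - a) /
    ((ascPochhammer ℂ n).eval (1 / 2) * (n.factorial : ℂ))

lemma poch_half_ne_zero (n : ℕ) : (ascPochhammer ℂ n).eval (1 / 2 : ℂ) ≠ 0 := by
  induction n with
  | zero => simp
  | succ n ih =>
    rw [ascPochhammer_succ_eval]
    refine mul_ne_zero ih ?_
    have : ((1:ℂ)/2 + n) = (((1:ℝ)/2 + n : ℝ) : ℂ) := by push_cast; ring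
    rw [this, Complex.ofReal_ne_zero]
    positivity

lemma cc_zero (a : ℂ) : cc a 0 = 1 := by simp [cc]

lemma cc_rec (a : ℂ) (n : ℕ) :
    cc a (n + 1) * ((2 * (n:ℂ) + 2) * (2 * (n:ℂ) + 1)) =
      cc a n * ((2 * (n:ℂ) + 1) ^ 2 - (2 * a - 1) ^ 2) := by
  have hP := poch_half_ne_zero n
  have hhalf : ((1:ℂ)/2 + n) ≠ 0 := by
    have : ((1:ℂ)/2 + n) = (((1:ℝ)/2 + n : ℝ) : ℂ) := by push_cast; ring
    rw [this, Complex.ofReal_ne_zero]; positivity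
  have hfac : ((n.factorial : ℂ)) ≠ 0 := by
    exact_mod_cast Nat.cast_ne_zero.mpr n.factorial_ne_zero
  have hn1 : ((n:ℂ) + 1) ≠ 0 := by
    have : ((n:ℂ) + 1) = (((n:ℝ) + 1 : ℝ) : ℂ) := by push_cast; ring
    rw [this, Complex.ofReal_ne_zero]; positivity
  unfold cc
  rw [ascPochhammer_succ_eval, ascPochhammer_succ_eval, ascPochhammer_succ_eval,
    Nat.factorial_succ]
  generalize (ascPochhammer ℂ n).eval a = A
  generalize (ascPochhammer ℂ n).eval (1 - a) = B
  generalize hPq : (ascPochhammer ℂ n).eval (1/2 : ℂ) = P at hP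
  generalize hFq : ((n.factorial : ℕ) : ℂ) = F at hfac
  have hcast : (((n + 1) * n.factorial : ℕ) : ℂ) = ((n:ℂ) + 1) * F := by
    push_cast [hFq]; ring
  rw [hcast]
  rw [div_mul_eq_mul_div, div_mul_eq_mul_div, div_eq_div_iff
    (by exact mul_ne_zero (mul_ne_zero hP hhalf) (mul_ne_zero hn1 hfac))
    (by exact mul_ne_zero hP hfac)]
  ring



open Finset

lemma sum_inv_sq_le (n : ℕ) :
    (∑ j ∈ range n, 1 / ((j:ℝ) + 1) ^ 2) ≤ 2 - 2 / ((n:ℝ) + 1) := by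
  induction n with
  | zero => simp
  | succ n ih =>
    rw [Finset.sum_range_succ]
    push_cast
    have hx0 : (0:ℝ) < (n:ℝ) + 1 := by positivity
    have hx1 : (0:ℝ) < (n:ℝ) + 2 := by positivity
    have key : 1 / ((n:ℝ) + 1) ^ 2 ≤ 2 / ((n:ℝ) + 1) - 2 / ((n:ℝ) + 2) := by
      rw [div_sub_div _ _ (ne_of_gt hx0) (ne_of_gt hx1), div_le_div_iff₀ (by positivity) (by positivity)]
      ring_nf
      nlinarith [sq_nonneg ((n:ℝ))]
    have h2 : 2 - 2 / ((n:ℝ) + 1) + (2 / ((n:ℝ) + 1) - 2 / ((n:ℝ) + 2)) = 2 - 2/((n:ℝ) + 2) := by ring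
    calc (∑ j ∈ range n, 1 / ((j:ℝ) + 1) ^ 2) + 1 / ((n:ℝ) + 1) ^ 2
        ≤ (2 - 2 / ((n:ℝ) + 1)) + (2 / ((n:ℝ) + 1) - 2 / ((n:ℝ) + 2)) := by
          exact add_le_add ih key
      _ = 2 - 2/((n:ℝ) + 2) := h2
      _ = 2 - 2/((n:ℝ) + 1 + 1) := by ring

lemma norm_cc_succ_le (a : ℂ) (n : ℕ) :
    ‖cc a (n + 1)‖ ≤ ‖cc a n‖ * Real.exp (‖2 * a - 1‖ ^ 2 / ((n:ℝ) + 1) ^ 2) := by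
  set K2 : ℝ := ‖2 * a - 1‖ ^ 2 with hK2
  have hK2nn : 0 ≤ K2 := by positivity
  have hden : ‖((2 * (n:ℂ) + 2) * (2 * (n:ℂ) + 1))‖ = (2 * (n:ℝ) + 2) * (2 * (n:ℝ) + 1) := by
    have h1 : ((2 * (n:ℂ) + 2) * (2 * (n:ℂ) + 1)) = (((2 * (n:ℝ) + 2) * (2 * (n:ℝ) + 1) : ℝ) : ℂ) := by
      push_cast; ring
    rw [h1, Complex.norm_real, Real.norm_eq_abs, abs_of_pos (by positivity)]
  have hnum : ‖(2 * (n:ℂ) + 1) ^ 2 - (2 * a - 1) ^ 2‖ ≤ (2 * (n:ℝ) + 1) ^ 2 + K2 := by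
    refine (norm_sub_le _ _).trans ?_
    rw [norm_pow, norm_pow]
    have h1 : ‖(2 * (n:ℂ) + 1)‖ = 2 * (n:ℝ) + 1 := by
      have h2 : (2 * (n:ℂ) + 1) = ((2 * (n:ℝ) + 1 : ℝ) : ℂ) := by push_cast; ring
      rw [h2, Complex.norm_real, Real.norm_eq_abs, abs_of_pos (by positivity)]
    rw [h1]
  have hDpos : (0:ℝ) < (2 * (n:ℝ) + 2) * (2 * (n:ℝ) + 1) := by positivity
  have key : ‖cc a (n + 1)‖ * ((2 * (n:ℝ) + 2) * (2 * (n:ℝ) + 1)) =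
      ‖cc a n‖ * ‖(2 * (n:ℂ) + 1) ^ 2 - (2 * a - 1) ^ 2‖ := by
    rw [← hden, ← norm_mul, ← norm_mul, cc_rec]
  have hcc1 : ‖cc a (n + 1)‖ = ‖cc a n‖ * ‖(2 * (n:ℂ) + 1) ^ 2 - (2 * a - 1) ^ 2‖ /
      ((2 * (n:ℝ) + 2) * (2 * (n:ℝ) + 1)) := by
    field_simp at key ⊢
    linarith [key]
  have hmid : ‖cc a (n + 1)‖ ≤ ‖cc a n‖ * (1 + K2 / ((n:ℝ) + 1) ^ 2) := by
    rw [hcc1, div_le_iff₀ hDpos]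
    have hineq : ((2 * (n:ℝ) + 1) ^ 2 + K2) ≤ (1 + K2 / ((n:ℝ) + 1) ^ 2) * ((2 * (n:ℝ) + 2) * (2 * (n:ℝ) + 1)) := by
      have hp : (0:ℝ) < ((n:ℝ) + 1) ^ 2 := by positivity
      have h3 : K2 / ((n:ℝ) + 1) ^ 2 * ((2 * (n:ℝ) + 2) * (2 * (n:ℝ) + 1)) ≥ K2 := by
        rw [div_mul_eq_mul_div, ge_iff_le, le_div_iff₀ hp]
        nlinarith [hK2nn, sq_nonneg ((n:ℝ))]
      nlinarith [sq_nonneg ((n:ℝ))]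
    calc ‖cc a n‖ * ‖(2 * (n:ℂ) + 1) ^ 2 - (2 * a - 1) ^ 2‖
        ≤ ‖cc a n‖ * ((2 * (n:ℝ) + 1) ^ 2 + K2) := by
          exact mul_le_mul_of_nonneg_left hnum (norm_nonneg _)
      _ ≤ ‖cc a n‖ * ((1 + K2 / ((n:ℝ) + 1) ^ 2) * ((2 * (n:ℝ) + 2) * (2 * (n:ℝ) + 1))) := by
          exact mul_le_mul_of_nonneg_left hineq (norm_nonneg _)
      _ = ‖cc a n‖ * (1 + K2 / ((n:ℝ) + 1) ^ 2) * ((2 * (n:ℝ) + 2) * (2 * (n:ℝ) + 1)) := by ring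
  refine hmid.trans (mul_le_mul_of_nonneg_left ?_ (norm_nonneg _))
  have := Real.add_one_le_exp (K2 / ((n:ℝ) + 1) ^ 2)
  linarith

lemma norm_cc_le (a : ℂ) (n : ℕ) : ‖cc a n‖ ≤ Real.exp (2 * ‖2 * a - 1‖ ^ 2) := by
  set K2 : ℝ := ‖2 * a - 1‖ ^ 2 with hK2
  have hK2nn : 0 ≤ K2 := by positivity
  have main : ∀ n : ℕ, ‖cc a n‖ ≤ Real.exp (∑ j ∈ range n, K2 / ((j:ℝ) + 1) ^ 2) := by
    intro n
    induction n with
    | zero => simp [cc_zero]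
    | succ n ih =>
      refine (norm_cc_succ_le a n).trans ?_
      rw [Finset.sum_range_succ, Real.exp_add]
      exact mul_le_mul_of_nonneg_right ih (Real.exp_nonneg _)
  refine (main n).trans (Real.exp_le_exp.mpr ?_)
  have h1 : (∑ j ∈ range n, K2 / ((j:ℝ) + 1) ^ 2) = K2 * ∑ j ∈ range n, 1 / ((j:ℝ) + 1) ^ 2 := by
    rw [Finset.mul_sum]
    refine Finset.sum_congr rfl fun j _ => by ring
  rw [h1]
  have h2 : (∑ j ∈ range n, 1 / ((j:ℝ) + 1) ^ 2) ≤ 2 := by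
    refine (sum_inv_sq_le n).trans ?_
    have : 0 ≤ 2 / ((n:ℝ) + 1) := by positivity
    linarith
  calc K2 * (∑ j ∈ range n, 1 / ((j:ℝ) + 1) ^ 2) ≤ K2 * 2 := mul_le_mul_of_nonneg_left h2 hK2nn
    _ = 2 * K2 := by ring



noncomputable def ff (a : ℂ) (n : ℕ) (θ : ℝ) : ℂ :=
  cc a n * Complex.cos θ * Complex.sin θ ^ (2 * n)

noncomputable def ff1 (a : ℂ) (n : ℕ) (θ : ℝ) : ℂ :=
  cc a n * (((2 * n : ℕ) : ℂ) * Complex.sin θ ^ (2 * n - 1) * Complex.cos θ ^ 2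
    - Complex.sin θ ^ (2 * n + 1))

noncomputable def ff2 (a : ℂ) (n : ℕ) (θ : ℝ) : ℂ :=
  cc a n * Complex.cos θ * (((2 * n * (2 * n - 1) : ℕ) : ℂ) * Complex.sin θ ^ (2 * n - 2)
    - ((2 * n + 1 : ℕ) : ℂ) ^ 2 * Complex.sin θ ^ (2 * n))

lemma hasDerivAt_ff (a : ℂ) (n : ℕ) (θ : ℝ) :
    HasDerivAt (fun t => ff a n t) (ff1 a n θ) θ := by
  have hsin : HasDerivAt (fun t : ℝ => Complex.sin t) (Complex.cos θ) θ :=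
    (Complex.hasDerivAt_sin (θ:ℂ)).comp_ofReal
  have hcos : HasDerivAt (fun t : ℝ => Complex.cos t) (-Complex.sin θ) θ :=
    (Complex.hasDerivAt_cos (θ:ℂ)).comp_ofReal
  have hpow := (hasDerivAt_pow (2 * n) (Complex.sin θ)).comp θ hsin
  have h := (hcos.mul hpow).const_mul (cc a n)
  have hfun : (fun t : ℝ => ff a n t)
      = fun t : ℝ => cc a n * (Complex.cos t * Complex.sin t ^ (2 * n)) := by
    funext t; simp [ff, mul_assoc]
  rw [hfun]
  refine h.congr_deriv (Eq.symm ?_)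
  simp only [Function.comp_apply]
  unfold ff1
  push_cast
  ring

lemma hasDerivAt_ff1 (a : ℂ) (n : ℕ) (θ : ℝ) :
    HasDerivAt (fun t => ff1 a n t) (ff2 a n θ) θ := by
  have hsin : HasDerivAt (fun t : ℝ => Complex.sin t) (Complex.cos θ) θ :=
    (Complex.hasDerivAt_sin (θ:ℂ)).comp_ofReal
  have hcos : HasDerivAt (fun t : ℝ => Complex.cos t) (-Complex.sin θ) θ :=
    (Complex.hasDerivAt_cos (θ:ℂ)).comp_ofReal
  have hp1 := (hasDerivAt_pow (2 * n - 1) (Complex.sin θ)).comp θ hsin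
  have hc2 := (hasDerivAt_pow 2 (Complex.cos θ)).comp θ hcos
  have t1 := (hp1.const_mul (((2 * n : ℕ) : ℂ))).mul hc2
  have t2 := (hasDerivAt_pow (2 * n + 1) (Complex.sin θ)).comp θ hsin
  have h := (t1.sub t2).const_mul (cc a n)
  have hfun : (fun t : ℝ => ff1 a n t)
      = fun t : ℝ => cc a n * ((((2 * n : ℕ) : ℂ) * Complex.sin t ^ (2 * n - 1)) * Complex.cos t ^ 2
        - Complex.sin t ^ (2 * n + 1)) := by
    funext t; unfold ff1; ring
  rw [hfun]
  refine h.congr_deriv (Eq.symm ?_)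
  simp only [Function.comp_apply]
  rcases n with _ | m
  · unfold ff2
    norm_num
  · unfold ff2
    have e1 : 2 * (m + 1) - 1 = 2 * m + 1 := by omega
    have e2 : 2 * m + 1 - 1 = 2 * m := by omega
    have e3 : 2 * (m + 1) + 1 - 1 = 2 * m + 2 := by omega
    have e4 : 2 * (m + 1) - 2 = 2 * m := by omega
    have e5 : 2 * (m + 1) = 2 * m + 2 := by omega
    rw [e1, e2, e3, e4, e5]
    push_cast
    linear_combination (-1 * cc a (m + 1) * Complex.cos θ * (2 * (m:ℂ) + 2) * (2 * (m:ℂ) + 1)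
      * Complex.sin θ ^ (2 * m)) * (Complex.sin_sq_add_cos_sq (θ:ℂ))




noncomputable def q : ℝ := Real.sin 1.5
noncomputable def BB (a : ℂ) : ℝ := Real.exp (2 * ‖2 * a - 1‖ ^ 2)

lemma one_le_BB (a : ℂ) : 1 ≤ BB a := Real.one_le_exp (by positivity)
lemma BB_pos (a : ℂ) : 0 < BB a := lt_of_lt_of_le one_pos (one_le_BB a)

lemma norm_cc_le' (a : ℂ) (n : ℕ) : ‖cc a n‖ ≤ BB a := norm_cc_le a n

lemma hq0 : 0 < q := by
  have h3 : (3:ℝ) < Real.pi := Real.pi_gt_three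
  refine Real.sin_pos_of_pos_of_lt_pi (by norm_num) (by norm_num; linarith)

lemma h15pi : (1.5:ℝ) < Real.pi / 2 := by
  have h3 : (3:ℝ) < Real.pi := Real.pi_gt_three
  norm_num
  linarith

lemma hq1 : q < 1 := by
  have hpi := Real.pi_pos
  have hh := h15pi
  have := Real.strictMonoOn_sin (a := 1.5) (b := Real.pi / 2)
    ⟨by norm_num; linarith, le_of_lt hh⟩
    ⟨by linarith, le_refl _⟩ hh
  rw [Real.sin_pi_div_two] at this
  exact this

lemma mul3_le {a b c d e f : ℝ} (ha : 0 ≤ a) (hb : 0 ≤ b) (hc : 0 ≤ c)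
    (h1 : a ≤ d) (h2 : b ≤ e) (h3 : c ≤ f) : a * b * c ≤ d * e * f := by
  have hd : 0 ≤ d := ha.trans h1
  have he : 0 ≤ e := hb.trans h2
  exact mul_le_mul (mul_le_mul h1 h2 hb hd) h3 hc (mul_nonneg hd he)

lemma norm_sin_le {θ : ℝ} (hθ : θ ∈ Set.Ioo (-1.5:ℝ) 1.5) : ‖Complex.sin θ‖ ≤ q := by
  rw [← Complex.ofReal_sin, Complex.norm_real, Real.norm_eq_abs]
  have hpi := Real.pi_pos
  have hh := h15pi
  have hm := Real.strictMonoOn_sin.monotoneOn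
  have m15 : (1.5:ℝ) ∈ Set.Icc (-(Real.pi/2)) (Real.pi/2) := ⟨by linarith, hh.le⟩
  have mneg : (-1.5:ℝ) ∈ Set.Icc (-(Real.pi/2)) (Real.pi/2) := ⟨by linarith, by linarith⟩
  have mθ : θ ∈ Set.Icc (-(Real.pi/2)) (Real.pi/2) :=
    ⟨by have := hθ.1; linarith, by have := hθ.2; linarith⟩
  rw [abs_le]
  constructor
  · have h := hm mneg mθ (le_of_lt hθ.1)
    rw [show (-1.5:ℝ) = -(1.5:ℝ) by norm_num, Real.sin_neg] at h
    unfold q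
    linarith
  · exact hm mθ m15 (le_of_lt hθ.2)

lemma norm_cos_le (θ : ℝ) : ‖Complex.cos θ‖ ≤ 1 := by
  rw [← Complex.ofReal_cos, Complex.norm_real, Real.norm_eq_abs]
  exact Real.abs_cos_le_one θ

lemma norm_ff_le (a : ℂ) (n : ℕ) {θ : ℝ} (hθ : θ ∈ Set.Ioo (-1.5:ℝ) 1.5) :
    ‖ff a n θ‖ ≤ BB a * (q ^ 2) ^ n := by
  have h0 : ‖ff a n θ‖ = ‖cc a n‖ * ‖Complex.cos θ‖ * ‖Complex.sin θ‖ ^ (2 * n) := by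
    rw [ff, norm_mul, norm_mul, norm_pow]
  rw [h0, ← pow_mul]
  have h := mul3_le (norm_nonneg (cc a n)) (norm_nonneg (Complex.cos (θ:ℂ)))
    (pow_nonneg (norm_nonneg (Complex.sin (θ:ℂ))) (2*n)) (norm_cc_le' a n) (norm_cos_le θ)
    (pow_le_pow_left₀ (norm_nonneg _) (norm_sin_le hθ) (2*n))
  calc ‖cc a n‖ * ‖Complex.cos θ‖ * ‖Complex.sin θ‖ ^ (2 * n)
      ≤ BB a * 1 * q ^ (2 * n) := h
    _ = BB a * q ^ (2 * n) := by ring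

lemma norm_ff1_le (a : ℂ) (n : ℕ) {θ : ℝ} (hθ : θ ∈ Set.Ioo (-1.5:ℝ) 1.5) :
    ‖ff1 a n θ‖ ≤ BB a * (2 * (n:ℝ) + 1) * q ^ n := by
  have hq0' := hq0.le
  have hq1' := hq1.le
  have hsin := norm_sin_le hθ
  have h1 : ‖ff1 a n θ‖ ≤ ‖cc a n‖ * (‖((2 * n : ℕ) : ℂ) * Complex.sin θ ^ (2 * n - 1) * Complex.cos θ ^ 2‖
      + ‖Complex.sin θ ^ (2 * n + 1)‖) := by
    rw [ff1, norm_mul]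
    exact mul_le_mul_of_nonneg_left (norm_sub_le _ _) (norm_nonneg _)
  have h2 : ‖((2 * n : ℕ) : ℂ) * Complex.sin θ ^ (2 * n - 1) * Complex.cos θ ^ 2‖
      ≤ (2 * (n:ℝ)) * q ^ n := by
    rw [norm_mul, norm_mul, norm_pow, norm_pow, Complex.norm_natCast]
    have hc : ((2 * n : ℕ) : ℝ) = 2 * (n:ℝ) := by push_cast; ring
    rw [hc]
    have hstep : ‖Complex.sin θ‖ ^ (2*n-1) ≤ q ^ n :=
      (pow_le_pow_left₀ (norm_nonneg _) hsin _).trans (pow_le_pow_of_le_one hq0' hq1' (by omega))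
    have h := mul3_le (by positivity : (0:ℝ) ≤ 2 * (n:ℝ)) (pow_nonneg (norm_nonneg _) _)
      (pow_nonneg (norm_nonneg _) 2) (le_refl (2 * (n:ℝ))) hstep
      (pow_le_pow_left₀ (norm_nonneg _) (norm_cos_le θ) 2)
    calc 2 * (n:ℝ) * ‖Complex.sin θ‖ ^ (2*n-1) * ‖Complex.cos θ‖ ^ 2
        ≤ 2 * (n:ℝ) * q ^ n * 1 ^ 2 := h
      _ = 2 * (n:ℝ) * q ^ n := by ring
  have h3 : ‖Complex.sin θ ^ (2 * n + 1)‖ ≤ q ^ n := by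
    rw [norm_pow]
    exact (pow_le_pow_left₀ (norm_nonneg _) hsin _).trans
      (pow_le_pow_of_le_one hq0' hq1' (by omega))
  calc ‖ff1 a n θ‖ ≤ ‖cc a n‖ * ((2 * (n:ℝ)) * q ^ n + q ^ n) :=
        h1.trans (mul_le_mul_of_nonneg_left (add_le_add h2 h3) (norm_nonneg _))
    _ ≤ BB a * ((2 * (n:ℝ)) * q ^ n + q ^ n) :=
        mul_le_mul_of_nonneg_right (norm_cc_le' a n) (by positivity)
    _ = BB a * (2 * (n:ℝ) + 1) * q ^ n := by ring

lemma norm_ff2_le (a : ℂ) (n : ℕ) {θ : ℝ} (hθ : θ ∈ Set.Ioo (-1.5:ℝ) 1.5) :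
    ‖ff2 a n θ‖ ≤ 9 * BB a / q * ((n:ℝ) + 1) ^ 2 * q ^ n := by
  have hq0' := hq0.le
  have hq1' := hq1.le
  have hq00 := hq0
  have hq11 := hq1
  have hsin := norm_sin_le hθ
  have hBpos := BB_pos a
  have h1 : ‖ff2 a n θ‖ ≤ ‖cc a n‖ * 1 * (((2 * n * (2 * n - 1) : ℕ) : ℝ) * ‖Complex.sin θ‖ ^ (2 * n - 2)
      + ((2 * n + 1 : ℕ) : ℝ) ^ 2 * ‖Complex.sin θ‖ ^ (2 * n)) := by
    unfold ff2
    rw [norm_mul, norm_mul]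
    refine mul3_le (norm_nonneg _) (norm_nonneg _) (norm_nonneg _) (le_refl _) (norm_cos_le θ) ?_
    refine (norm_sub_le _ _).trans ?_
    rw [norm_mul, norm_mul, norm_pow, norm_pow, norm_pow, Complex.norm_natCast,
      Complex.norm_natCast]
  rcases n with _ | m
  · have h0 : ff2 a 0 θ = -(cc a 0 * Complex.cos θ) := by
      unfold ff2; norm_num
    rw [h0, norm_neg, norm_mul]
    have : ‖cc a 0‖ * ‖Complex.cos θ‖ ≤ BB a * 1 :=
      mul_le_mul (norm_cc_le' a 0) (norm_cos_le θ) (norm_nonneg _) hBpos.le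
    have h9 : BB a ≤ 9 * BB a / q := by
      rw [le_div_iff₀ hq00]
      nlinarith
    calc ‖cc a 0‖ * ‖Complex.cos θ‖ ≤ BB a := by linarith
      _ ≤ 9 * BB a / q := h9
      _ = 9 * BB a / q * (((0:ℕ):ℝ) + 1) ^ 2 * q ^ (0:ℕ) := by norm_num
  · have e1 : 2 * (m+1) - 2 = 2 * m := by omega
    have e2 : 2 * (m+1) = 2 * m + 2 := by omega
    have ec1 : (((2*m+2) * (2*m+2 - 1) : ℕ) : ℝ) = (2*(m:ℝ)+2) * (2*(m:ℝ)+1) := by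
      push_cast [show 2*m+2-1 = 2*m+1 from by omega]; ring
    have ec2 : ((2*m+2 + 1 : ℕ) : ℝ) = 2*(m:ℝ)+3 := by push_cast; ring
    rw [e1, e2] at h1
    rw [ec1, ec2, mul_one] at h1
    have hs1 : ‖Complex.sin θ‖ ^ (2*m) ≤ q ^ m :=
      (pow_le_pow_left₀ (norm_nonneg _) hsin _).trans (pow_le_pow_of_le_one hq0' hq1' (by omega))
    have hs2 : ‖Complex.sin θ‖ ^ (2*m+2) ≤ q ^ m :=
      (pow_le_pow_left₀ (norm_nonneg _) hsin _).trans (pow_le_pow_of_le_one hq0' hq1' (by omega))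
    have key : (2*(m:ℝ)+2) * (2*(m:ℝ)+1) * ‖Complex.sin θ‖ ^ (2*m)
        + (2*(m:ℝ)+3)^2 * ‖Complex.sin θ‖ ^ (2*m+2) ≤ 9 * ((m:ℝ)+2)^2 * q ^ m := by
      have k1 : (2*(m:ℝ)+2) * (2*(m:ℝ)+1) * ‖Complex.sin θ‖ ^ (2*m)
          ≤ (2*(m:ℝ)+2) * (2*(m:ℝ)+1) * q ^ m :=
        mul_le_mul_of_nonneg_left hs1 (by positivity)
      have k2 : (2*(m:ℝ)+3)^2 * ‖Complex.sin θ‖ ^ (2*m+2) ≤ (2*(m:ℝ)+3)^2 * q ^ m :=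
        mul_le_mul_of_nonneg_left hs2 (by positivity)
      have k3 : (0:ℝ) ≤ ((m:ℝ)^2 + 18*(m:ℝ) + 25) * q ^ m :=
        mul_nonneg (by positivity) (by positivity)
      nlinarith
    calc ‖ff2 a (m+1) θ‖ ≤ BB a * (9 * ((m:ℝ)+2)^2 * q ^ m) := by
          refine h1.trans ?_
          exact mul_le_mul (norm_cc_le' a (m+1)) key (by positivity) hBpos.le
      _ = 9 * BB a / q * ((m:ℝ)+2)^2 * q ^ (m+1) := by
          rw [pow_succ]
          field_simp
          ring
      _ = 9 * BB a / q * (((m+1:ℕ):ℝ) + 1) ^ 2 * q ^ (m+1) := by push_cast; ring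

lemma summable_u0 (a : ℂ) : Summable (fun n : ℕ => BB a * (q ^ 2) ^ n) := by
  refine Summable.mul_left _ (summable_geometric_of_lt_one (by positivity) ?_)
  nlinarith [hq0, hq1]

lemma summable_u1 (a : ℂ) : Summable (fun n : ℕ => BB a * (2 * (n:ℝ) + 1) * q ^ n) := by
  have hq : ‖q‖ < 1 := by rw [Real.norm_eq_abs, abs_of_pos hq0]; exact hq1
  have h1 := summable_pow_mul_geometric_of_norm_lt_one 1 hq
  have h0 := summable_geometric_of_norm_lt_one hq
  have h : Summable (fun n : ℕ => 2 * ((n:ℝ) ^ 1 * q ^ n) + q ^ n) := (h1.mul_left 2).add h0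
  refine ((h.mul_left (BB a)).congr fun n => ?_)
  simp only [pow_one]; ring

lemma summable_u2 (a : ℂ) : Summable (fun n : ℕ => 9 * BB a / q * ((n:ℝ) + 1) ^ 2 * q ^ n) := by
  have hq : ‖q‖ < 1 := by rw [Real.norm_eq_abs, abs_of_pos hq0]; exact hq1
  have h2 := summable_pow_mul_geometric_of_norm_lt_one 2 hq
  have h1 := summable_pow_mul_geometric_of_norm_lt_one 1 hq
  have h0 := summable_geometric_of_norm_lt_one hq
  have h : Summable (fun n : ℕ => ((n:ℝ) ^ 2 * q ^ n + 2 * ((n:ℝ) ^ 1 * q ^ n)) + q ^ n) :=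
    (h2.add (h1.mul_left 2)).add h0
  refine ((h.mul_left (9 * BB a / q)).congr fun n => ?_)
  simp only [pow_one]; ring


lemma summable_u3 (a : ℂ) : Summable (fun n : ℕ => (2 * (n:ℝ) + 1) ^ 2 * (BB a * (q ^ 2) ^ n)) := by
  have hQ : ‖q ^ 2‖ < 1 := by
    rw [Real.norm_eq_abs, abs_of_pos (pow_pos hq0 2)]
    nlinarith [hq0, hq1]
  have h2 := summable_pow_mul_geometric_of_norm_lt_one 2 hQ
  have h1 := summable_pow_mul_geometric_of_norm_lt_one 1 hQ
  have h0 := summable_geometric_of_norm_lt_one hQ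
  have h : Summable (fun n : ℕ => 4 * ((n:ℝ) ^ 2 * (q ^ 2) ^ n) + (4 * ((n:ℝ) ^ 1 * (q ^ 2) ^ n) + (q ^ 2) ^ n)) :=
    (h2.mul_left 4).add ((h1.mul_left 4).add h0)
  refine ((h.mul_left (BB a)).congr fun n => ?_)
  simp only [pow_one]; ring

open Filter



noncomputable def HH (a : ℂ) (θ : ℝ) : ℂ := ∑' n, ff a n θ
noncomputable def HH1 (a : ℂ) (θ : ℝ) : ℂ := ∑' n, ff1 a n θ
noncomputable def HH2 (a : ℂ) (θ : ℝ) : ℂ := ∑' n, ff2 a n θ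

lemma hsum0 (a : ℂ) {θ : ℝ} (hθ : θ ∈ Set.Ioo (-1.5:ℝ) 1.5) :
    Summable (fun n => ff a n θ) :=
  Summable.of_norm_bounded (summable_u0 a) (fun n => norm_ff_le a n hθ)

lemma hsum1 (a : ℂ) {θ : ℝ} (hθ : θ ∈ Set.Ioo (-1.5:ℝ) 1.5) :
    Summable (fun n => ff1 a n θ) :=
  Summable.of_norm_bounded (summable_u1 a) (fun n => norm_ff1_le a n hθ)

lemma hsum2 (a : ℂ) {θ : ℝ} (hθ : θ ∈ Set.Ioo (-1.5:ℝ) 1.5) :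
    Summable (fun n => ff2 a n θ) :=
  Summable.of_norm_bounded (summable_u2 a) (fun n => norm_ff2_le a n hθ)

lemma hderiv1 (a : ℂ) {θ : ℝ} (hθ : θ ∈ Set.Ioo (-1.5:ℝ) 1.5) :
    HasDerivAt (HH a) (HH1 a θ) θ := by
  refine hasDerivAt_of_tendstoLocallyUniformlyOn isOpen_Ioo
    ((tendstoUniformlyOn_tsum_nat (summable_u1 a)
      (fun n x hx => norm_ff1_le a n hx)).tendstoLocallyUniformlyOn)
    (Eventually.of_forall fun N x hx => HasDerivAt.sum fun i _ => hasDerivAt_ff a i x)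
    (fun x hx => by simp only [Finset.sum_apply]; exact (hsum0 a hx).hasSum.tendsto_sum_nat) hθ

lemma hderiv2 (a : ℂ) {θ : ℝ} (hθ : θ ∈ Set.Ioo (-1.5:ℝ) 1.5) :
    HasDerivAt (HH1 a) (HH2 a θ) θ := by
  refine hasDerivAt_of_tendstoLocallyUniformlyOn isOpen_Ioo
    ((tendstoUniformlyOn_tsum_nat (summable_u2 a)
      (fun n x hx => norm_ff2_le a n hx)).tendstoLocallyUniformlyOn)
    (Eventually.of_forall fun N x hx => HasDerivAt.sum fun i _ => hasDerivAt_ff1 a i x)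
    (fun x hx => by simp only [Finset.sum_apply]; exact (hsum1 a hx).hasSum.tendsto_sum_nat) hθ

lemma hode (a : ℂ) {θ : ℝ} (hθ : θ ∈ Set.Ioo (-1.5:ℝ) 1.5) :
    HH2 a θ = -(2 * a - 1) ^ 2 * HH a θ := by
  set u : ℕ → ℂ := fun n => cc a n * Complex.cos θ *
    (((2 * n * (2 * n - 1) : ℕ) : ℂ) * Complex.sin θ ^ (2 * n - 2)) with hu
  set v : ℕ → ℂ := fun n => cc a n * Complex.cos θ *
    (((2 * n + 1 : ℕ) : ℂ) ^ 2 * Complex.sin θ ^ (2 * n)) with hv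
  have huv : ∀ n, ff2 a n θ = u n - v n := by
    intro n; simp only [hu, hv, ff2]; ring
  have hvsum : Summable v := by
    refine Summable.of_norm_bounded (summable_u3 a) (fun n => ?_)
    have : ‖v n‖ = ((2 * n + 1 : ℕ) : ℝ) ^ 2 * ‖ff a n θ‖ := by
      simp only [hv, ff]
      rw [show cc a n * Complex.cos ↑θ * (((2 * n + 1 : ℕ) : ℂ) ^ 2 * Complex.sin ↑θ ^ (2 * n))
        = ((2 * n + 1 : ℕ) : ℂ) ^ 2 * (cc a n * Complex.cos ↑θ * Complex.sin ↑θ ^ (2 * n)) from by ring]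
      rw [norm_mul, norm_pow, Complex.norm_natCast]
    rw [this]
    have hc : ((2 * n + 1 : ℕ) : ℝ) = 2 * (n:ℝ) + 1 := by push_cast; ring
    rw [hc]
    exact mul_le_mul_of_nonneg_left (norm_ff_le a n hθ) (by positivity)
  have husum : Summable u := by
    have : u = fun n => ff2 a n θ + v n := by
      funext n; rw [huv n]; ring
    rw [this]
    exact (hsum2 a hθ).add hvsum
  have husum' : Summable (fun n => u (n + 1)) := (summable_nat_add_iff 1).mpr husum
  have hu0 : u 0 = 0 := by simp [hu]
  have termwise : ∀ n, u (n + 1) - v n = -(2 * a - 1) ^ 2 * ff a n θ := by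
    intro n
    simp only [hu, hv, ff]
    rw [show 2 * (n + 1) - 2 = 2 * n from by omega]
    rw [show ((2 * (n+1) * (2 * (n+1) - 1) : ℕ) : ℂ) = (2 * (n:ℂ) + 2) * (2 * (n:ℂ) + 1) from by
      push_cast [show 2 * (n+1) - 1 = 2 * n + 1 from by omega]; ring]
    rw [show ((2 * n + 1 : ℕ) : ℂ) = 2 * (n:ℂ) + 1 from by push_cast; ring]
    linear_combination (Complex.cos (θ:ℂ) * Complex.sin (θ:ℂ) ^ (2 * n)) * cc_rec a n
  calc HH2 a θ = ∑' n, (u n - v n) := tsum_congr huv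
    _ = ∑' n, u n - ∑' n, v n := Summable.tsum_sub husum hvsum
    _ = (u 0 + ∑' n, u (n + 1)) - ∑' n, v n := by rw [Summable.tsum_eq_zero_add husum]
    _ = ∑' n, u (n + 1) - ∑' n, v n := by rw [hu0, zero_add]
    _ = ∑' n, (u (n + 1) - v n) := (Summable.tsum_sub husum' hvsum).symm
    _ = ∑' n, (-(2 * a - 1) ^ 2 * ff a n θ) := tsum_congr termwise
    _ = -(2 * a - 1) ^ 2 * HH a θ := tsum_mul_left

lemma hasDerivAt_ck (K : ℂ) (θ : ℝ) :
    HasDerivAt (fun t : ℝ => Complex.cos (K * t)) (-K * Complex.sin (K * θ)) θ := by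
  have h1 : HasDerivAt (fun z : ℂ => Complex.cos (K * z)) (-Complex.sin (K * θ) * K) (θ:ℂ) :=
    (Complex.hasDerivAt_cos (K * (θ:ℂ))).comp (θ:ℂ)
      (by simpa using (hasDerivAt_id (θ:ℂ)).const_mul K)
  have := h1.comp_ofReal
  convert this using 1
  ring

lemma hasDerivAt_sk (K : ℂ) (θ : ℝ) :
    HasDerivAt (fun t : ℝ => Complex.sin (K * t)) (K * Complex.cos (K * θ)) θ := by
  have h1 : HasDerivAt (fun z : ℂ => Complex.sin (K * z)) (Complex.cos (K * θ) * K) (θ:ℂ) :=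
    (Complex.hasDerivAt_sin (K * (θ:ℂ))).comp (θ:ℂ)
      (by simpa using (hasDerivAt_id (θ:ℂ)).const_mul K)
  have := h1.comp_ofReal
  convert this using 1
  ring

lemma hH1_zero (a : ℂ) : HH1 a 0 = 0 := by
  have h : ∀ n, ff1 a n 0 = 0 := by
    intro n
    unfold ff1
    rcases n with _ | m
    · simp
    · have h1 : 2 * (m+1) - 1 ≠ 0 := by omega
      have h2 : 2 * (m+1) + 1 ≠ 0 := by omega
      simp [Complex.ofReal_zero, Complex.sin_zero, zero_pow h1, zero_pow h2]
  unfold HH1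
  simp [h]

lemma hH_zero (a : ℂ) : HH a 0 = 1 := by
  unfold HH
  rw [tsum_eq_single 0 (fun n hn => ?_)]
  · unfold ff
    simp [cc_zero]
  · unfold ff
    have : (2 * n) ≠ 0 := by omega
    simp [Complex.ofReal_zero, Complex.sin_zero, zero_pow this]

lemma icc_subset : Set.Icc (0:ℝ) (Real.pi/3) ⊆ Set.Ioo (-1.5:ℝ) 1.5 := by
  intro x hx
  have hpi : Real.pi < 3.15 := Real.pi_lt_d2
  constructor
  · have := hx.1; norm_num; linarith
  · have := hx.2; norm_num; linarith

lemma HH_value (a : ℂ) : HH a (Real.pi/3) = Complex.cos ((2*a-1) * ((Real.pi : ℂ)/3)) := by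
  set K : ℂ := 2*a - 1 with hK
  set W : ℝ → ℂ := fun t => HH1 a t + K * Complex.sin (K * t) with hW
  set V : ℝ → ℂ := fun t => HH a t - Complex.cos (K * t) with hV
  set A : ℝ → ℂ := fun t => W t * Complex.cos (K * t) + K * V t * Complex.sin (K * t) with hA
  set B : ℝ → ℂ := fun t => W t * Complex.sin (K * t) - K * V t * Complex.cos (K * t) with hB
  have hVd : ∀ {x : ℝ}, x ∈ Set.Ioo (-1.5:ℝ) 1.5 → HasDerivAt V (W x) x := by
    intro x hx
    have h := (hderiv1 a hx).sub (hasDerivAt_ck K x)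
    refine h.congr_deriv (Eq.symm ?_)
    simp only [hW]
    ring
  have hWd : ∀ {x : ℝ}, x ∈ Set.Ioo (-1.5:ℝ) 1.5 →
      HasDerivAt W (HH2 a x + K^2 * Complex.cos (K * x)) x := by
    intro x hx
    have h := (hderiv2 a hx).add ((hasDerivAt_sk K x).const_mul K)
    refine h.congr_deriv (Eq.symm ?_)
    ring
  have hAd : ∀ {x : ℝ}, x ∈ Set.Ioo (-1.5:ℝ) 1.5 → HasDerivAt A 0 x := by
    intro x hx
    have h := ((hWd hx).mul (hasDerivAt_ck K x)).add
      (((hVd hx).const_mul K).mul (hasDerivAt_sk K x))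
    refine h.congr_deriv (Eq.symm ?_)
    have hode' := hode a hx
    simp only [hV]
    linear_combination (-(Complex.cos (K * x)) - 0) * hode' + (Complex.cos (K*x) * HH2 a x
      + K^2 * Complex.cos (K*x)^2 - Complex.cos (K*x) * HH2 a x) * 0
  have hBd : ∀ {x : ℝ}, x ∈ Set.Ioo (-1.5:ℝ) 1.5 → HasDerivAt B 0 x := by
    intro x hx
    have h := ((hWd hx).mul (hasDerivAt_sk K x)).sub
      (((hVd hx).const_mul K).mul (hasDerivAt_ck K x))
    refine h.congr_deriv (Eq.symm ?_)
    have hode' := hode a hx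
    simp only [hV]
    linear_combination (-(Complex.sin (K * x))) * hode'
  have hsubset := icc_subset
  have hcontA : ContinuousOn A (Set.Icc (0:ℝ) (Real.pi/3)) :=
    fun x hx => ((hAd (hsubset hx)).continuousAt).continuousWithinAt
  have hcontB : ContinuousOn B (Set.Icc (0:ℝ) (Real.pi/3)) :=
    fun x hx => ((hBd (hsubset hx)).continuousAt).continuousWithinAt
  have hAconst := constant_of_has_deriv_right_zero hcontA
    (fun x hx => (hAd (hsubset (Set.mem_Icc_of_Ico hx))).hasDerivWithinAt)
  have hBconst := constant_of_has_deriv_right_zero hcontB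
    (fun x hx => (hBd (hsubset (Set.mem_Icc_of_Ico hx))).hasDerivWithinAt)
  have h00 : ((0:ℝ):ℂ) = 0 := Complex.ofReal_zero
  have hW0 : W 0 = 0 := by simp [hW, h00, hH1_zero a]
  have hV0 : V 0 = 0 := by simp [hV, h00, hH_zero a]
  have hA0 : A 0 = 0 := by simp [hA, hW0, hV0]
  have hB0 : B 0 = 0 := by simp [hB, hW0, hV0]
  have hWzero : ∀ x ∈ Set.Icc (0:ℝ) (Real.pi/3), W x = 0 := by
    intro x hx
    have hAx : A x = 0 := (hAconst x hx).trans hA0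
    have hBx : B x = 0 := (hBconst x hx).trans hB0
    have pyth := Complex.sin_sq_add_cos_sq (K * (x:ℂ))
    have hWx : W x = A x * Complex.cos (K * x) + B x * Complex.sin (K * x) := by
      simp only [hA, hB]
      linear_combination (-(W x)) * pyth
    rw [hWx, hAx, hBx]
    ring
  have hcontV : ContinuousOn V (Set.Icc (0:ℝ) (Real.pi/3)) :=
    fun x hx => ((hVd (hsubset hx)).continuousAt).continuousWithinAt
  have hVconst := constant_of_has_deriv_right_zero hcontV (fun x hx => by
    have h := (hVd (hsubset (Set.mem_Icc_of_Ico hx))).hasDerivWithinAt (s := Set.Ici x)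
    rwa [hWzero x (Set.mem_Icc_of_Ico hx)] at h)
  have hpi3 : Real.pi/3 ∈ Set.Icc (0:ℝ) (Real.pi/3) := ⟨by positivity, le_refl _⟩
  have hfin := (hVconst _ hpi3).trans hV0
  have hfin2 : HH a (Real.pi/3) = Complex.cos (K * ((Real.pi/3 : ℝ) : ℂ)) := by
    simpa [hV, sub_eq_zero] using hfin
  rw [hfin2]
  congr 1
  push_cast
  ring

lemma pi3_mem : (Real.pi/3 : ℝ) ∈ Set.Ioo (-1.5:ℝ) 1.5 :=
  icc_subset ⟨by positivity, le_refl _⟩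

theorem main (a : ℂ) :
    HasSum (fun n => (ascPochhammer ℂ n).eval a * (ascPochhammer ℂ n).eval (1-a) /
      ((ascPochhammer ℂ n).eval (1/2) * (n.factorial : ℂ)) * (3/4 : ℂ) ^ n)
      (2 * Complex.sin ((4 * a + 1) * (Real.pi : ℂ) / 6)) := by
  have hθ0 := pi3_mem
  have hhs : HasSum (fun n => ff a n (Real.pi/3)) (HH a (Real.pi/3)) := (hsum0 a hθ0).hasSum
  rw [HH_value a] at hhs
  have hcos : Complex.cos ((Real.pi/3 : ℝ) : ℂ) = 1/2 := by
    rw [← Complex.ofReal_cos, Real.cos_pi_div_three]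
    norm_num
  have hsin2 : Complex.sin ((Real.pi/3 : ℝ) : ℂ) ^ 2 = (3/4 : ℂ) := by
    rw [← Complex.ofReal_sin, Real.sin_pi_div_three, ← Complex.ofReal_pow]
    rw [div_pow, Real.sq_sqrt (by norm_num : (3:ℝ) ≥ 0)]
    norm_num
  have hterm : ∀ n, (ascPochhammer ℂ n).eval a * (ascPochhammer ℂ n).eval (1-a) /
      ((ascPochhammer ℂ n).eval (1/2) * (n.factorial : ℂ)) * (3/4 : ℂ) ^ n
      = 2 * ff a n (Real.pi/3) := by
    intro n
    unfold ff cc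
    rw [pow_mul, hsin2, hcos]
    ring
  have h2 := hhs.mul_left 2
  have heq : (fun n => (ascPochhammer ℂ n).eval a * (ascPochhammer ℂ n).eval (1-a) /
      ((ascPochhammer ℂ n).eval (1/2) * (n.factorial : ℂ)) * (3/4 : ℂ) ^ n)
      = fun n => 2 * ff a n (Real.pi/3) := funext hterm
  rw [heq]
  have hang : (4 * a + 1) * (Real.pi : ℂ) / 6 = (2*a-1) * ((Real.pi : ℂ)/3) + (Real.pi : ℂ)/2 := by
    ring
  rw [hang, Complex.sin_add_pi_div_two]
  exact h2


end HypAux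

/-- For every complex `a`, `F(a, 1 - a; 1/2; 3/4) = 2 sin((4a + 1)π/6)`. -/
theorem hyp_value_three_quarters'' (a : ℂ) :
    HasSum (gaussHypTerm a (1 - a) (1 / 2) (3 / 4))
      (2 * Complex.sin ((4 * a + 1) * (Real.pi : ℂ) / 6)) := by
  have h := HypAux.main a
  exact h
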